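/- arXiv:0812.1639 — 2 statements merged into one kernel-verified Lean document; each statement's English description precedes it below -/
import Mathlib

section
/- Let G be a symmetric positive definite matrix indexed by a finite set T, let q > 1, and define ρ₁ = inf { ⟨f, G⁻¹ f⟩ : ‖f‖_{2q} = 1 } and ρ₂ = sup { ⟨f, G f⟩ : ‖f‖_{2q/(2q-1)} = 1 }, where ‖f‖_p = (∑_{x∈T} |f(x)|^p)^{1/p}. Then ρ₂ = 1/ρ₁. -/
open Matrix Finset

lemma gcs {T : Type*} [Fintype T] [DecidableEq T] (G : Matrix T T ℝ)
    (hsym : G.IsSymm) (hpd : G.PosDef) (f g : T → ℝ) :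
    (f ⬝ᵥ g)^2 ≤ (f ⬝ᵥ (G *ᵥ f)) * (g ⬝ᵥ (G⁻¹ *ᵥ g)) := by
  have hGinv : G * G⁻¹ = 1 := mul_nonsing_inv G hpd.det_pos.ne'.isUnit
  set h : T → ℝ := G⁻¹ *ᵥ g with hh
  have hGh : G *ᵥ h = g := by rw [hh, mulVec_mulVec, hGinv, one_mulVec]
  have hvm : ∀ u : T → ℝ, u ᵥ* G = G *ᵥ u := by
    intro u
    rw [← hsym]
    rw [vecMul_transpose, hsym]
  have hcross : h ⬝ᵥ (G *ᵥ f) = f ⬝ᵥ g := by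
    rw [dotProduct_mulVec, hvm, hGh, dotProduct_comm]
  have key : ∀ t : ℝ, 0 ≤ (g ⬝ᵥ (G⁻¹ *ᵥ g)) * (t*t) + (2*(f ⬝ᵥ g)) * t + (f ⬝ᵥ (G *ᵥ f)) := by
    intro t
    have h0 : 0 ≤ (f + t • h) ⬝ᵥ (G *ᵥ (f + t • h)) := by
      simpa using hpd.posSemidef.dotProduct_mulVec_nonneg (f + t • h)
    have hexp : (f + t • h) ⬝ᵥ (G *ᵥ (f + t • h))
        = (g ⬝ᵥ (G⁻¹ *ᵥ g)) * (t*t) + (2*(f ⬝ᵥ g)) * t + (f ⬝ᵥ (G *ᵥ f)) := by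
      rw [mulVec_add, mulVec_smul, hGh, dotProduct_add, add_dotProduct, add_dotProduct,
        dotProduct_smul, smul_dotProduct, smul_dotProduct, dotProduct_smul, hcross,
        dotProduct_comm h g, ← hh, smul_eq_mul, smul_eq_mul]
      simp only [smul_eq_mul]; ring
    linarith [hexp ▸ h0]
  have hd := discrim_le_zero key
  rw [discrim] at hd
  nlinarith [hd]

lemma rpow_eq_one_aux {S e : ℝ} (hS : 0 ≤ S) (he : e ≠ 0) (h : S ^ e = 1) : S = 1 := by
  have h2 := congrArg (· ^ e⁻¹) h
  simpa [Real.rpow_rpow_inv hS he] using h2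

/-- For a symmetric positive definite matrix `G` on a finite set `T` and `q > 1`,
`ρ₂ = sup{⟨f,Gf⟩ : ‖f‖_{2q/(2q-1)} = 1}` equals `1/ρ₁` where
`ρ₁ = inf{⟨f,G⁻¹f⟩ : ‖f‖_{2q} = 1}`. -/
theorem sSup_quadratic_eq_inv_sInf_quadratic
    {T : Type*} [Fintype T] [Nonempty T] [DecidableEq T]
    (G : Matrix T T ℝ) (hsym : G.IsSymm) (hpd : G.PosDef) (q : ℝ) (hq : 1 < q) :
    sSup {s : ℝ | ∃ f : T → ℝ,
        (∑ x : T, |f x| ^ (2 * q / (2 * q - 1))) ^ ((2 * q - 1) / (2 * q)) = 1 ∧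
        s = f ⬝ᵥ (G *ᵥ f)}
      = 1 / sInf {s : ℝ | ∃ f : T → ℝ,
        (∑ x : T, |f x| ^ (2 * q)) ^ (1 / (2 * q)) = 1 ∧
        s = f ⬝ᵥ (G⁻¹ *ᵥ f)} := by
  set p := 2 * q with hpdef
  have hp2 : (2:ℝ) < p := by rw [hpdef]; linarith
  have hp1 : (1:ℝ) < p := by linarith
  have hp0 : (0:ℝ) < p := by linarith
  have hpm1 : (0:ℝ) < p - 1 := by linarith
  have hr0 : (0:ℝ) < p / (p - 1) := by positivity
  have hconj : Real.HolderConjugate (p / (p-1)) p := by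
    exact ((Real.holderConjugate_iff_eq_conjExponent hp1).mpr rfl).symm
  set S₂ : Set ℝ := {s : ℝ | ∃ f : T → ℝ,
      (∑ x : T, |f x| ^ (p / (p - 1))) ^ ((p - 1) / p) = 1 ∧ s = f ⬝ᵥ (G *ᵥ f)} with hS₂
  set S₁ : Set ℝ := {s : ℝ | ∃ f : T → ℝ,
      (∑ x : T, |f x| ^ p) ^ (1 / p) = 1 ∧ s = f ⬝ᵥ (G⁻¹ *ᵥ f)} with hS₁
  -- basic consequences of the norm constraints
  have hsum2 : ∀ f : T → ℝ, (∑ x : T, |f x| ^ (p / (p - 1))) ^ ((p - 1) / p) = 1 →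
      (∑ x : T, |f x| ^ (p / (p - 1))) = 1 ∧ f ≠ 0 := by
    intro f hf
    have hnn : (0:ℝ) ≤ ∑ x : T, |f x| ^ (p / (p - 1)) :=
      Finset.sum_nonneg fun x _ => Real.rpow_nonneg (abs_nonneg _) _
    have hne : (p - 1) / p ≠ 0 := by positivity
    have h1 := rpow_eq_one_aux hnn hne hf
    refine ⟨h1, ?_⟩
    rintro rfl
    simp [Real.zero_rpow (ne_of_gt hr0)] at h1
  have hsum1 : ∀ g : T → ℝ, (∑ x : T, |g x| ^ p) ^ (1 / p) = 1 →
      (∑ x : T, |g x| ^ p) = 1 ∧ g ≠ 0 := by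
    intro g hg
    have hnn : (0:ℝ) ≤ ∑ x : T, |g x| ^ p :=
      Finset.sum_nonneg fun x _ => Real.rpow_nonneg (abs_nonneg _) _
    have hne : 1 / p ≠ 0 := by positivity
    have h1 := rpow_eq_one_aux hnn hne hg
    refine ⟨h1, ?_⟩
    rintro rfl
    simp [Real.zero_rpow (ne_of_gt hp0)] at h1
  -- positivity lower bound for S₁
  obtain ⟨x₀⟩ := ‹Nonempty T›
  set M : ℝ := ∑ x : T, ∑ y : T, |G x y| with hM
  have hGxx : 0 < G x₀ x₀ := by
    have := hpd.dotProduct_mulVec_pos (x := Pi.single x₀ 1) (by intro h; simpa using congrFun h x₀)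
    simpa [dotProduct, mulVec, Pi.single_apply] using this
  have hMpos : 0 < M := by
    have h1 : |G x₀ x₀| ≤ ∑ y : T, |G x₀ y| :=
      Finset.single_le_sum (f := fun y => |G x₀ y|) (fun y _ => abs_nonneg _) (Finset.mem_univ x₀)
    have h2 : ∑ y : T, |G x₀ y| ≤ M :=
      Finset.single_le_sum (f := fun x => ∑ y : T, |G x y|)
        (fun x _ => Finset.sum_nonneg fun y _ => abs_nonneg _) (Finset.mem_univ x₀)
    have h3 := le_abs_self (G x₀ x₀)
    linarith
  have habs1 : ∀ g : T → ℝ, (∑ x : T, |g x| ^ p) = 1 → ∀ x, |g x| ≤ 1 := by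
    intro g hgsum x
    by_contra hx
    push_neg at hx
    have h1 : (1:ℝ) < |g x| ^ p := by
      calc (1:ℝ) = 1 ^ p := (Real.one_rpow p).symm
      _ < |g x| ^ p := Real.rpow_lt_rpow (by norm_num) hx hp0
    have h2 : |g x| ^ p ≤ ∑ y : T, |g y| ^ p :=
      Finset.single_le_sum (fun y _ => Real.rpow_nonneg (abs_nonneg _) _) (Finset.mem_univ x)
    rw [hgsum] at h2
    linarith
  have hS₁lb : ∀ s ∈ S₁, 1 / M ≤ s := by
    rintro s ⟨g, hg, rfl⟩
    obtain ⟨hgsum, hg0⟩ := hsum1 g hg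
    have hab := habs1 g hgsum
    -- 1 ≤ g ⬝ᵥ g
    have hgg : 1 ≤ g ⬝ᵥ g := by
      have hpt : ∀ x : T, |g x| ^ p ≤ g x * g x := by
        intro x
        rcases eq_or_ne (g x) 0 with h | h
        · simp [h, Real.zero_rpow hp0.ne']
        · have ha : 0 < |g x| := abs_pos.mpr h
          calc |g x| ^ p ≤ |g x| ^ (2:ℝ) :=
                Real.rpow_le_rpow_of_exponent_ge ha (hab x) (by linarith)
          _ = g x * g x := by
                rw [show (2:ℝ) = ((2:ℕ):ℝ) by norm_num, Real.rpow_natCast, sq_abs, sq]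
      calc (1:ℝ) = ∑ x : T, |g x| ^ p := hgsum.symm
      _ ≤ ∑ x : T, g x * g x := Finset.sum_le_sum fun x _ => hpt x
      _ = g ⬝ᵥ g := rfl
    -- g ⬝ᵥ G g ≤ M
    have hgGg : g ⬝ᵥ (G *ᵥ g) ≤ M := by
      have hrw : g ⬝ᵥ (G *ᵥ g) = ∑ x : T, ∑ y : T, g x * (G x y * g y) := by
        simp [dotProduct, mulVec, Finset.mul_sum]
      rw [hrw, hM]
      refine Finset.sum_le_sum fun x _ => Finset.sum_le_sum fun y _ => ?_
      calc g x * (G x y * g y) ≤ |g x * (G x y * g y)| := le_abs_self _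
      _ = |g x| * (|G x y| * |g y|) := by rw [abs_mul, abs_mul]
      _ ≤ 1 * (|G x y| * 1) := by
          apply mul_le_mul (hab x) _ (by positivity) (by norm_num)
          exact mul_le_mul_of_nonneg_left (hab y) (abs_nonneg _)
      _ = |G x y| := by ring
    have hcs := gcs G hsym hpd g g
    have hGgpos : 0 < g ⬝ᵥ (G *ᵥ g) := by
      simpa using hpd.dotProduct_mulVec_pos hg0
    have hXnn : 0 ≤ g ⬝ᵥ (G⁻¹ *ᵥ g) := by
      simpa using hpd.inv.posSemidef.dotProduct_mulVec_nonneg g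
    rw [div_le_iff₀ hMpos]
    nlinarith
  have hsingle : ∀ e : ℝ, 0 < e → (∑ x : T, |(Pi.single x₀ 1 : T → ℝ) x| ^ e) = 1 := by
    intro e he
    rw [Finset.sum_eq_single x₀]
    · simp
    · intro b _ hb
      simp [Pi.single_eq_of_ne hb, Real.zero_rpow he.ne']
    · simp
  have hS₁ne : S₁.Nonempty := by
    refine ⟨_, Pi.single x₀ 1, ?_, rfl⟩
    rw [hsingle p hp0, Real.one_rpow]
  have hS₂ne : S₂.Nonempty := by
    refine ⟨_, Pi.single x₀ 1, ?_, rfl⟩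
    rw [hsingle _ hr0, Real.one_rpow]
  have hbdd₁ : BddBelow S₁ := ⟨1/M, hS₁lb⟩
  set ρ₁ := sInf S₁ with hρ₁
  have hρ₁pos : 0 < ρ₁ := lt_of_lt_of_le (by positivity) (le_csInf hS₁ne hS₁lb)
  -- upper bound for S₂
  have hS₂ub : ∀ s ∈ S₂, s ≤ 1 / ρ₁ := by
    rintro s ⟨f, hf, rfl⟩
    obtain ⟨hfsum, hf0⟩ := hsum2 f hf
    set s := f ⬝ᵥ (G *ᵥ f) with hs
    have hspos : 0 < s := by simpa using hpd.dotProduct_mulVec_pos hf0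
    have hGf0 : G *ᵥ f ≠ 0 := by
      intro h
      have hinj := Matrix.mulVec_injective_iff_isUnit.mpr hpd.isUnit
      exact hf0 (hinj (by rw [h, mulVec_zero]))
    set SN : ℝ := ∑ x : T, |(G *ᵥ f) x| ^ p with hSN
    obtain ⟨x₁, hx₁⟩ : ∃ x, (G *ᵥ f) x ≠ 0 := by
      by_contra h
      push_neg at h
      exact hGf0 (funext h)
    have hSNpos : 0 < SN :=
      Finset.sum_pos' (fun x _ => Real.rpow_nonneg (abs_nonneg _) _)
        ⟨x₁, Finset.mem_univ _, Real.rpow_pos_of_pos (abs_pos.mpr hx₁) _⟩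
    set N : ℝ := SN ^ (1/p) with hN
    have hNpos : 0 < N := Real.rpow_pos_of_pos hSNpos _
    -- Hölder : s ≤ N
    have hsN : s ≤ N := by
      have hH := Real.inner_le_Lp_mul_Lq (s := Finset.univ) f (G *ᵥ f) hconj
      rw [hfsum, Real.one_rpow, one_mul] at hH
      exact hH
    -- the normalized dual vector
    set g : T → ℝ := N⁻¹ • (G *ᵥ f) with hg
    have hgsum : (∑ x : T, |g x| ^ p) = (N⁻¹) ^ p * SN := by
      rw [hSN, Finset.mul_sum]
      refine Finset.sum_congr rfl fun x _ => ?_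
      rw [hg, Pi.smul_apply, smul_eq_mul, abs_mul, abs_of_pos (inv_pos.mpr hNpos),
        Real.mul_rpow (inv_pos.mpr hNpos).le (abs_nonneg _)]
    have hgconstraint : (∑ x : T, |g x| ^ p) ^ (1/p) = 1 := by
      rw [hgsum, Real.mul_rpow (by positivity) hSNpos.le, one_div,
        Real.rpow_rpow_inv (inv_pos.mpr hNpos).le hp0.ne']
      have hN' : SN ^ p⁻¹ = N := by rw [hN, one_div]
      rw [hN']
      exact inv_mul_cancel₀ hNpos.ne'
    have hgval : g ⬝ᵥ (G⁻¹ *ᵥ g) = N⁻¹ * (N⁻¹ * s) := by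
      rw [hg, mulVec_smul, smul_dotProduct, dotProduct_smul, smul_eq_mul, smul_eq_mul,
        mulVec_mulVec, nonsing_inv_mul G hpd.det_pos.ne'.isUnit, one_mulVec,
        dotProduct_comm, hs]
    have hmem : N⁻¹ * (N⁻¹ * s) ∈ S₁ := ⟨g, hgconstraint, hgval.symm⟩
    have hρ₁le : ρ₁ ≤ N⁻¹ * (N⁻¹ * s) := csInf_le hbdd₁ hmem
    rw [le_div_iff₀ hρ₁pos]
    have h01 : s * N⁻¹ ≤ 1 := by
      rw [← mul_inv_cancel₀ hNpos.ne']
      exact mul_le_mul_of_nonneg_right hsN (inv_pos.mpr hNpos).le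
    nlinarith [inv_pos.mpr hNpos]
  have hbdd₂ : BddAbove S₂ := ⟨1/ρ₁, hS₂ub⟩
  set ρ₂ := sSup S₂ with hρ₂
  have hup : ρ₂ ≤ 1 / ρ₁ := csSup_le hS₂ne hS₂ub
  -- lower bound: for every t ∈ S₁, 1 ≤ ρ₂ * t
  have hkey : ∀ t ∈ S₁, 1 ≤ ρ₂ * t := by
    rintro t ⟨g, hgc, rfl⟩
    obtain ⟨hgsum, hg0⟩ := hsum1 g hgc
    set f : T → ℝ := fun x => g x * |g x| ^ (p - 2) with hf
    have hpt : ∀ x : T, |f x| ^ (p / (p - 1)) = |g x| ^ p := by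
      intro x
      rcases eq_or_ne (g x) 0 with h | h
      · simp [hf, h, Real.zero_rpow hr0.ne', Real.zero_rpow hp0.ne',
          Real.zero_rpow (show p - 2 ≠ 0 by linarith)]
      · have ha : 0 < |g x| := abs_pos.mpr h
        have habs : |f x| = |g x| ^ (p - 1) := by
          rw [hf]
          rw [abs_mul, abs_of_pos (Real.rpow_pos_of_pos ha _)]
          rw [show |g x| * |g x| ^ (p-2) = |g x| ^ (1:ℝ) * |g x| ^ (p-2) by
            rw [Real.rpow_one]]
          rw [← Real.rpow_add ha]
          congr 1
          ring
        rw [habs, ← Real.rpow_mul ha.le]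
        congr 1
        field_simp
    have hfg : ∀ x : T, f x * g x = |g x| ^ p := by
      intro x
      rcases eq_or_ne (g x) 0 with h | h
      · simp [hf, h, Real.zero_rpow hp0.ne']
      · have ha : 0 < |g x| := abs_pos.mpr h
        rw [hf]
        have : g x * |g x| ^ (p - 2) * g x = (g x * g x) * |g x| ^ (p-2) := by ring
        rw [this, ← abs_mul_abs_self,
          show |g x| * |g x| = |g x| ^ (2:ℝ) by
            rw [show (2:ℝ) = ((2:ℕ):ℝ) by norm_num, Real.rpow_natCast, sq],
          ← Real.rpow_add ha]
        congr 1
        ring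
    have hfconstraint : (∑ x : T, |f x| ^ (p / (p - 1))) ^ ((p - 1) / p) = 1 := by
      have : (∑ x : T, |f x| ^ (p / (p - 1))) = 1 := by
        rw [Finset.sum_congr rfl fun x _ => hpt x]
        exact hgsum
      rw [this, Real.one_rpow]
    have hfgdot : f ⬝ᵥ g = 1 := by
      have : f ⬝ᵥ g = ∑ x : T, f x * g x := rfl
      rw [this, Finset.sum_congr rfl fun x _ => hfg x]
      exact hgsum
    have hmem : f ⬝ᵥ (G *ᵥ f) ∈ S₂ := ⟨f, hfconstraint, rfl⟩
    have hsle : f ⬝ᵥ (G *ᵥ f) ≤ ρ₂ := le_csSup hbdd₂ hmem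
    have hcs := gcs G hsym hpd f g
    rw [hfgdot] at hcs
    have hXnn : 0 ≤ g ⬝ᵥ (G⁻¹ *ᵥ g) := by
      simpa using hpd.inv.posSemidef.dotProduct_mulVec_nonneg g
    nlinarith
  have hρ₂pos : 0 < ρ₂ := by
    obtain ⟨t, ht⟩ := hS₁ne
    have h1 := hkey t ht
    have h2 : 0 < t := lt_of_lt_of_le (by positivity) (hS₁lb t ht)
    nlinarith
  have hlow : 1 / ρ₁ ≤ ρ₂ := by
    have : 1 / ρ₂ ≤ ρ₁ := by
      apply le_csInf hS₁ne
      intro t ht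
      rw [div_le_iff₀ hρ₂pos]
      have := hkey t ht
      linarith [hkey t ht]
    rw [div_le_iff₀ hρ₁pos]
    calc (1:ℝ) = ρ₂ * (1/ρ₂) := by field_simp
    _ ≤ ρ₂ * ρ₁ := by apply mul_le_mul_of_nonneg_left this (le_of_lt hρ₂pos)
  linarith
end

section
/- Let (Z_x)_{x∈T} be a centered Gaussian vector indexed by a finite set T with covariance G, let q ≥ 1, and let ρ₂ = sup { ⟨f, G f⟩ : ‖f‖_{(2q)'} = 1 }, where (2q)' = 2q/(2q−1). Then for every b > 0, P( ‖Z‖_{2q} ≥ b ) ≥ (√ρ₂ / (√(2π) b)) · (1 − ρ₂/b²) · exp( − b²/(2ρ₂) ). -/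
open MeasureTheory ProbabilityTheory Matrix Real

section AuxGaussTail
open Set Filter Topology


lemma gauss_tail (v : ℝ) (hv : 0 < v) (b : ℝ) (hb : 0 < b) :
    Real.sqrt v / (Real.sqrt (2 * π) * b) * (1 - v / b ^ 2) * Real.exp (-b ^ 2 / (2 * v))
      ≤ ((gaussianReal 0 v.toNNReal) (Set.Ici b)).toReal := by
  have hvne : v.toNNReal ≠ 0 := by simp [Real.toNNReal_eq_zero, not_le, hv]
  have hcoe : ((v.toNNReal : ℝ)) = v := Real.coe_toNNReal v hv.le
  -- pdf
  set C : ℝ := (Real.sqrt (2 * π * v))⁻¹ with hC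
  have hCpos : 0 < C := by
    rw [hC]
    positivity
  have hpdf : gaussianPDFReal 0 v.toNNReal = fun x => C * Real.exp (-x ^ 2 / (2 * v)) := by
    funext x
    simp [gaussianPDFReal, hcoe, hC]
  have hInt : Integrable (fun x => C * Real.exp (-x ^ 2 / (2 * v))) := by
    rw [← hpdf]; exact integrable_gaussianPDFReal 0 v.toNNReal
  have hRHS : ((gaussianReal 0 v.toNNReal) (Set.Ici b)).toReal
      = ∫ x in Ioi b, C * Real.exp (-x ^ 2 / (2 * v)) := by
    rw [gaussianReal_apply_eq_integral 0 hvne, ENNReal.toReal_ofReal, hpdf,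
      integral_Ici_eq_integral_Ioi]
    exact setIntegral_nonneg measurableSet_Ici fun x _ => gaussianPDFReal_nonneg _ _ _
  rw [hRHS]
  by_cases hvb : b ^ 2 ≤ v
  · have h1 : Real.sqrt v / (Real.sqrt (2 * π) * b) * (1 - v / b ^ 2)
        * Real.exp (-b ^ 2 / (2 * v)) ≤ 0 := by
      apply mul_nonpos_of_nonpos_of_nonneg _ (Real.exp_nonneg _)
      apply mul_nonpos_of_nonneg_of_nonpos (by positivity)
      have : 1 ≤ v / b ^ 2 := (one_le_div (by positivity)).mpr hvb
      linarith
    refine h1.trans (setIntegral_nonneg measurableSet_Ioi fun x _ => by positivity)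
  push_neg at hvb
  -- the antiderivative
  set F : ℝ → ℝ := fun x => -(C * ((v * x⁻¹ - v ^ 2 * (x ^ 3)⁻¹) * Real.exp (-x ^ 2 / (2 * v))))
    with hF
  set f' : ℝ → ℝ := fun x => C * Real.exp (-x ^ 2 / (2 * v))
      - C * (3 * v ^ 2 * (x ^ 4)⁻¹ * Real.exp (-x ^ 2 / (2 * v))) with hf'
  have hderiv : ∀ x ∈ Ici b, HasDerivAt F (f' x) x := by
    intro x hx
    have hxpos : 0 < x := lt_of_lt_of_le hb hx
    have hxne : x ≠ 0 := hxpos.ne'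
    have h1 : HasDerivAt (fun y : ℝ => y⁻¹) (-(x ^ 2)⁻¹) x := hasDerivAt_inv hxne
    have h3 : HasDerivAt (fun y : ℝ => (y ^ 3)⁻¹) (-(3 * x ^ 2) / (x ^ 3) ^ 2) x := by
      have := (hasDerivAt_pow 3 x).inv (pow_ne_zero 3 hxne)
      exact this.congr_deriv (by norm_num)
    have hin : HasDerivAt (fun y : ℝ => -y ^ 2 / (2 * v)) (-(2 * x ^ 1) / (2 * v)) x :=
      ((hasDerivAt_pow 2 x).neg).div_const (2 * v)
    have hE : HasDerivAt (fun y : ℝ => Real.exp (-y ^ 2 / (2 * v)))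
        (Real.exp (-x ^ 2 / (2 * v)) * (-(2 * x ^ 1) / (2 * v))) x := hin.exp
    have hu : HasDerivAt (fun y : ℝ => v * y⁻¹ - v ^ 2 * (y ^ 3)⁻¹)
        (v * (-(x ^ 2)⁻¹) - v ^ 2 * (-(3 * x ^ 2) / (x ^ 3) ^ 2)) x :=
      (h1.const_mul v).sub (h3.const_mul (v ^ 2))
    have H := (((hu.mul hE).const_mul C).neg)
    refine H.congr_deriv ?_
    rw [hf']
    field_simp
    ring
  have hf'int : IntegrableOn f' (Ioi b) := by
    apply Integrable.sub hInt.integrableOn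
    have hmeas : AEStronglyMeasurable
        (fun x => C * (3 * v ^ 2 * (x ^ 4)⁻¹ * Real.exp (-x ^ 2 / (2 * v))))
        (volume.restrict (Ioi b)) := by
      apply Measurable.aestronglyMeasurable
      fun_prop
    apply Integrable.mono (hInt.const_mul (3 * v ^ 2 * (b ^ 4)⁻¹)).integrableOn hmeas
    filter_upwards [ae_restrict_mem measurableSet_Ioi] with x hx
    have hxb : b < x := hx
    have h4 : b ^ 4 ≤ x ^ 4 := pow_le_pow_left₀ hb.le hxb.le 4
    have hb4 : (0:ℝ) < b ^ 4 := by positivity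
    have hinv : (x ^ 4)⁻¹ ≤ (b ^ 4)⁻¹ := inv_anti₀ hb4 h4
    have hE1 : (0:ℝ) ≤ Real.exp (-x ^ 2 / (2 * v)) := Real.exp_nonneg _
    have hlhs : (0:ℝ) ≤ C * (3 * v ^ 2 * (x ^ 4)⁻¹ * Real.exp (-x ^ 2 / (2 * v))) := by
      positivity
    calc ‖C * (3 * v ^ 2 * (x ^ 4)⁻¹ * Real.exp (-x ^ 2 / (2 * v)))‖
        = C * (3 * v ^ 2 * (x ^ 4)⁻¹ * Real.exp (-x ^ 2 / (2 * v))) := by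
          rw [Real.norm_eq_abs, abs_of_nonneg hlhs]
      _ ≤ C * (3 * v ^ 2 * (b ^ 4)⁻¹ * Real.exp (-x ^ 2 / (2 * v))) := by
          apply mul_le_mul_of_nonneg_left _ hCpos.le
          apply mul_le_mul_of_nonneg_right _ hE1
          exact mul_le_mul_of_nonneg_left hinv (by positivity)
      _ = 3 * v ^ 2 * (b ^ 4)⁻¹ * (C * Real.exp (-x ^ 2 / (2 * v))) := by ring
      _ ≤ ‖3 * v ^ 2 * (b ^ 4)⁻¹ * (C * Real.exp (-x ^ 2 / (2 * v)))‖ := le_abs_self _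
  have htend : Tendsto F atTop (𝓝 0) := by
    have hu1 : Tendsto (fun x : ℝ => v * x⁻¹) atTop (𝓝 (v * 0)) :=
      tendsto_inv_atTop_zero.const_mul v
    have hu3 : Tendsto (fun x : ℝ => v ^ 2 * (x ^ 3)⁻¹) atTop (𝓝 (v ^ 2 * 0)) :=
      by
      have h3 : Tendsto (fun x : ℝ => (x ^ 3)⁻¹) atTop (𝓝 0) :=
        tendsto_inv_atTop_zero.comp (tendsto_pow_atTop (by norm_num : (3:ℕ) ≠ 0))
      exact h3.const_mul (v ^ 2)
    have hEb : Tendsto (fun x : ℝ => -x ^ 2 / (2 * v)) atTop atBot := by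
      apply Tendsto.atBot_div_const (by positivity)
      exact tendsto_neg_atBot_iff.mpr (tendsto_pow_atTop (by norm_num : (2:ℕ) ≠ 0))
    have hE : Tendsto (fun x : ℝ => Real.exp (-x ^ 2 / (2 * v))) atTop (𝓝 0) :=
      Real.tendsto_exp_atBot.comp hEb
    have := (((hu1.sub hu3).mul hE).const_mul C).neg
    simpa using this
  have hFTC : ∫ x in Ioi b, f' x = 0 - F b :=
    integral_Ioi_of_hasDerivAt_of_tendsto' hderiv hf'int htend
  have hmono : ∫ x in Ioi b, f' x ≤ ∫ x in Ioi b, C * Real.exp (-x ^ 2 / (2 * v)) := by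
    apply setIntegral_mono_on hf'int hInt.integrableOn measurableSet_Ioi
    intro x hx
    have hxpos : 0 < x := hb.trans hx
    rw [hf']
    have : 0 ≤ C * (3 * v ^ 2 * (x ^ 4)⁻¹ * Real.exp (-x ^ 2 / (2 * v))) := by positivity
    linarith
  refine le_trans ?_ (hFTC ▸ hmono)
  rw [zero_sub, hF]
  have hsq : Real.sqrt (2 * π * v) = Real.sqrt (2 * π) * Real.sqrt v := Real.sqrt_mul (by positivity) v
  have hvs : Real.sqrt v * Real.sqrt v = v := Real.mul_self_sqrt hv.le
  have hsp : (0:ℝ) < Real.sqrt (2 * π) := by positivity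
  have hsv : (0:ℝ) < Real.sqrt v := Real.sqrt_pos.mpr hv
  have : Real.sqrt v / (Real.sqrt (2 * π) * b) * (1 - v / b ^ 2)
      = C * (v * b⁻¹ - v ^ 2 * (b ^ 3)⁻¹) := by
    rw [hC, hsq]
    field_simp
    linear_combination hvs
  rw [this]
  ring_nf
  exact le_refl _


/-- Lower tail bound for the `ℓ^{2q}` norm of a centered Gaussian vector with
covariance `G`: with `ρ₂ = sup{⟨f,Gf⟩ : ‖f‖_{(2q)'} = 1}`,
`P(‖Z‖_{2q} ≥ b) ≥ (√ρ₂/(√(2π) b)) (1 − ρ₂/b²) exp(−b²/(2ρ₂))`. -/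
theorem gaussian_vector_lq_norm_lower_tail
    {Ω : Type*} [MeasurableSpace Ω] (P : Measure Ω) [IsProbabilityMeasure P]
    {T : Type*} [Fintype T] [Nonempty T]
    (G : Matrix T T ℝ) (hpd : G.PosDef)
    (Z : Ω → T → ℝ)
    (hZ : ∀ f : T → ℝ,
      P.map (fun ω => ∑ x : T, f x * Z ω x) = gaussianReal 0 (Real.toNNReal (f ⬝ᵥ (G *ᵥ f))))
    (q : ℝ) (hq : 1 ≤ q) (b : ℝ) (hb : 0 < b) :
    Real.sqrt (sSup {s : ℝ | ∃ f : T → ℝ,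
          (∑ x : T, |f x| ^ (2 * q / (2 * q - 1))) ^ ((2 * q - 1) / (2 * q)) = 1 ∧
          s = f ⬝ᵥ (G *ᵥ f)}) / (Real.sqrt (2 * π) * b)
        * (1 - (sSup {s : ℝ | ∃ f : T → ℝ,
          (∑ x : T, |f x| ^ (2 * q / (2 * q - 1))) ^ ((2 * q - 1) / (2 * q)) = 1 ∧
          s = f ⬝ᵥ (G *ᵥ f)}) / b ^ 2)
        * Real.exp (-b ^ 2 / (2 * sSup {s : ℝ | ∃ f : T → ℝ,
          (∑ x : T, |f x| ^ (2 * q / (2 * q - 1))) ^ ((2 * q - 1) / (2 * q)) = 1 ∧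
          s = f ⬝ᵥ (G *ᵥ f)}))
      ≤ (P {ω | b ≤ (∑ x : T, |Z ω x| ^ (2 * q)) ^ (1 / (2 * q))}).toReal := by
  classical
  have h2q : (1:ℝ) < 2 * q := by linarith
  have h2q1 : (0:ℝ) < 2 * q - 1 := by linarith
  set p : ℝ := 2 * q / (2 * q - 1) with hpdef
  set e : ℝ := (2 * q - 1) / (2 * q) with hedef
  have hppos : 0 < p := by positivity
  have hepos : 0 < e := by positivity
  have hp1 : 1 < p := by
    rw [hpdef, lt_div_iff₀ h2q1]; linarith
  have hconj : Real.HolderConjugate p (2 * q) := by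
    rw [Real.holderConjugate_iff]
    constructor
    · exact hp1
    · rw [hpdef]; field_simp; ring
  -- The constraint set
  set K : Set (T → ℝ) := {f : T → ℝ | (∑ x : T, |f x| ^ p) ^ e = 1} with hKdef
  have hKmem : ∀ f : T → ℝ, f ∈ K ↔ ∑ x : T, |f x| ^ p = 1 := by
    intro f
    have hsumnn : 0 ≤ ∑ x : T, |f x| ^ p :=
      Finset.sum_nonneg fun x _ => Real.rpow_nonneg (abs_nonneg _) _
    constructor
    · intro hf
      have : ((∑ x : T, |f x| ^ p) ^ e) ^ e⁻¹ = 1 ^ e⁻¹ := by rw [hf]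
      rwa [Real.rpow_rpow_inv hsumnn hepos.ne', Real.one_rpow] at this
    · intro hf
      show (∑ x : T, |f x| ^ p) ^ e = 1
      rw [hf, Real.one_rpow]
  -- K is nonempty
  obtain ⟨x₀⟩ := ‹Nonempty T›
  have hKne : K.Nonempty := by
    refine ⟨fun x => if x = x₀ then (1:ℝ) else 0, (hKmem _).mpr ?_⟩
    have h1 : ∀ x : T, |if x = x₀ then (1:ℝ) else 0| ^ p = if x = x₀ then (1:ℝ) else 0 := by
      intro x
      rcases eq_or_ne x x₀ with h | h
      · simp [h, Real.one_rpow]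
      · simp [h, Real.zero_rpow hppos.ne']
    simp only [h1]
    simp
  -- K is compact
  have hcontp : Continuous fun t : ℝ => |t| ^ p := by
    rw [continuous_iff_continuousAt]
    intro x
    exact (Real.continuousAt_rpow_const _ _ (Or.inr hppos.le)).comp continuous_abs.continuousAt
  have hcontsum : Continuous fun f : T → ℝ => ∑ x : T, |f x| ^ p :=
    continuous_finset_sum _ fun x _ => hcontp.comp (continuous_apply x)
  have hconte : Continuous fun f : T → ℝ => (∑ x : T, |f x| ^ p) ^ e := by
    rw [continuous_iff_continuousAt]
    intro f
    exact (Real.continuousAt_rpow_const _ _ (Or.inr hepos.le)).comp hcontsum.continuousAt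
  have hKclosed : IsClosed K := by
    have : K = (fun f : T → ℝ => (∑ x : T, |f x| ^ p) ^ e) ⁻¹' {1} := rfl
    rw [this]
    exact isClosed_singleton.preimage hconte
  have hKbdd : Bornology.IsBounded K := by
    apply (Metric.isBounded_closedBall (x := (0 : T → ℝ)) (r := 1)).subset
    intro f hf
    rw [mem_closedBall_zero_iff]
    rw [hKmem] at hf
    apply (pi_norm_le_iff_of_nonneg zero_le_one).mpr
    intro x
    rw [Real.norm_eq_abs]
    by_contra hgt
    push_neg at hgt
    have h1 : (1:ℝ) < |f x| ^ p :=
      (Real.one_lt_rpow_iff_of_pos (lt_trans zero_lt_one hgt)).mpr (Or.inl ⟨hgt, hppos⟩)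
    have h2 : |f x| ^ p ≤ ∑ y : T, |f y| ^ p :=
      Finset.single_le_sum (fun y _ => Real.rpow_nonneg (abs_nonneg _) _) (Finset.mem_univ x)
    rw [hf] at h2
    linarith
  have hKcompact : IsCompact K := Metric.isCompact_of_isClosed_isBounded hKclosed hKbdd
  -- The quadratic form is continuous
  have hφcont : Continuous fun f : T → ℝ => f ⬝ᵥ (G *ᵥ f) := by
    simp only [dotProduct, mulVec]
    exact continuous_finset_sum _ fun x _ => (continuous_apply x).mul
      (continuous_finset_sum _ fun y _ => (continuous_const.mul (continuous_apply y)))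
  obtain ⟨f₀, hf₀K, hmax⟩ := hKcompact.exists_isMaxOn hKne hφcont.continuousOn
  set ρ : ℝ := f₀ ⬝ᵥ (G *ᵥ f₀) with hρdef
  set S : Set ℝ := {s : ℝ | ∃ f : T → ℝ, (∑ x : T, |f x| ^ p) ^ e = 1 ∧ s = f ⬝ᵥ (G *ᵥ f)}
    with hSdef
  have hub : ∀ s ∈ S, s ≤ ρ := by
    rintro s ⟨f, hf, rfl⟩
    exact hmax hf
  have hSsup : sSup S = ρ :=
    le_antisymm (csSup_le ⟨ρ, f₀, hf₀K, rfl⟩ hub) (le_csSup ⟨ρ, hub⟩ ⟨f₀, hf₀K, rfl⟩)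
  have hf₀ne : f₀ ≠ 0 := by
    intro h
    have := (hKmem f₀).mp hf₀K
    rw [h] at this
    simp [Real.zero_rpow hppos.ne'] at this
  have hρpos : 0 < ρ := by
    have := hpd.dotProduct_mulVec_pos hf₀ne
    simpa using this
  -- Probability part
  set g : Ω → ℝ := fun ω => ∑ x : T, f₀ x * Z ω x with hgdef
  have hgmeas : AEMeasurable g P := by
    apply aemeasurable_of_map_neZero
    rw [hZ f₀]
    exact ⟨IsProbabilityMeasure.ne_zero _⟩
  have hsub : {ω | b ≤ g ω} ⊆ {ω | b ≤ (∑ x : T, |Z ω x| ^ (2 * q)) ^ (1 / (2 * q))} := by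
    intro ω hω
    have hH : g ω ≤ (∑ x : T, |f₀ x| ^ p) ^ (1 / p)
        * (∑ x : T, |Z ω x| ^ (2 * q)) ^ (1 / (2 * q)) :=
      Real.inner_le_Lp_mul_Lq Finset.univ f₀ (Z ω) hconj
    have h1p : 1 / p = e := by
      rw [hpdef, hedef, one_div_div]
    rw [h1p, hf₀K, one_mul] at hH
    exact le_trans hω hH
  have hPle : P {ω | b ≤ g ω} ≤ P {ω | b ≤ (∑ x : T, |Z ω x| ^ (2 * q)) ^ (1 / (2 * q))} :=
    measure_mono hsub
  have hmap : P {ω | b ≤ g ω} = (gaussianReal 0 ρ.toNNReal) (Set.Ici b) := by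
    have hpre : {ω | b ≤ g ω} = g ⁻¹' (Set.Ici b) := rfl
    rw [hpre, ← Measure.map_apply_of_aemeasurable hgmeas measurableSet_Ici, hZ f₀]
  rw [hSsup]
  calc Real.sqrt ρ / (Real.sqrt (2 * π) * b) * (1 - ρ / b ^ 2) * Real.exp (-b ^ 2 / (2 * ρ))
      ≤ ((gaussianReal 0 ρ.toNNReal) (Set.Ici b)).toReal := gauss_tail ρ hρpos b hb
    _ = (P {ω | b ≤ g ω}).toReal := by rw [hmap]
    _ ≤ _ := ENNReal.toReal_mono (measure_ne_top _ _) hPle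

end AuxGaussTail
end
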